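/- For every $\alpha\in(0,1]$ there exists an $\mathbb{N}^*\setminus Q$-free set $Q$ with exponent of convergence $\nu(Q)=\alpha$. -/

import Mathlib

open Finset Set

private lemma geom_partial_le {r : ℝ} (h0 : 0 ≤ r) (h1 : r < 1) (m : ℕ) :
    ∑ k ∈ Finset.range m, r ^ k ≤ (1 - r)⁻¹ :=
  sum_le_hasSum _ (fun i _ => pow_nonneg h0 i) (hasSum_geometric_of_lt_one h0 h1)

private lemma summable_of_block_bound (f : ℕ → ℝ) (hf : ∀ n, 0 ≤ f n)
    (c : ℕ → ℝ) (hblock : ∀ k, ∑ n ∈ Finset.Ioc (2^k) (2^(k+1)), f n ≤ c k)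
    (C : ℝ) (hC : ∀ m, ∑ k ∈ Finset.range m, c k ≤ C) :
    Summable f := by
  apply summable_of_sum_range_le (c := f 0 + f 1 + C) hf
  intro n
  have key : ∀ m, ∑ i ∈ Finset.Ioc 1 (2^m), f i ≤ ∑ k ∈ Finset.range m, c k := by
    intro m
    induction m with
    | zero => simp
    | succ m ih =>
      rw [← Finset.sum_Ioc_consecutive f (Nat.one_le_two_pow)
        (Nat.pow_le_pow_right (by norm_num) (Nat.le_succ m)), Finset.sum_range_succ]
      exact add_le_add ih (hblock m)
  have h1 : Finset.range n ⊆ Finset.range (2^n + 1) := by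
    apply Finset.range_subset_range.mpr
    have := Nat.lt_two_pow_self (n := n)
    omega
  have h2 : Finset.range (2^n + 1) = insert 0 (insert 1 (Finset.Ioc 1 (2^n))) := by
    ext i
    simp only [Finset.mem_range, Finset.mem_insert, Finset.mem_Ioc]
    have := Nat.one_le_two_pow (n := n)
    omega
  calc ∑ i ∈ Finset.range n, f i
      ≤ ∑ i ∈ Finset.range (2^n + 1), f i :=
        Finset.sum_le_sum_of_subset_of_nonneg h1 (fun i _ _ => hf i)
    _ = f 0 + (f 1 + ∑ i ∈ Finset.Ioc 1 (2^n), f i) := by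
        rw [h2, Finset.sum_insert (by simp), Finset.sum_insert (by simp)]
    _ ≤ f 0 + (f 1 + C) := by
        have := (key n).trans (hC n)
        linarith
    _ = f 0 + f 1 + C := by ring

/-- primes in the dyadic block `(2^k, 2^(k+1)]` -/
private def Pk (k : ℕ) : Finset ℕ := (Finset.Ioc (2^k) (2^(k+1))).filter Nat.Prime

private noncomputable def Nk (α : ℝ) (k : ℕ) : ℕ := ⌈(2:ℝ) ^ (α * k)⌉₊

private noncomputable def Fk (α : ℝ) (k : ℕ) : Finset ℕ :=
  ((Pk k).exists_subset_card_eq (n := min (Nk α k) (Pk k).card) (min_le_right _ _)).choose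

private lemma Fk_spec (α : ℝ) (k : ℕ) :
    Fk α k ⊆ Pk k ∧ (Fk α k).card = min (Nk α k) (Pk k).card :=
  ((Pk k).exists_subset_card_eq (n := min (Nk α k) (Pk k).card) (min_le_right _ _)).choose_spec

private lemma mem_Pk {n k : ℕ} (h : n ∈ Pk k) :
    n.Prime ∧ 2^k < n ∧ n ≤ 2^(k+1) := by
  simp only [Pk, Finset.mem_filter, Finset.mem_Ioc] at h
  tauto

private lemma block_unique {n j k : ℕ} (hj : 2^j < n ∧ n ≤ 2^(j+1))
    (hk : 2^k < n ∧ n ≤ 2^(k+1)) : j = k := by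
  by_contra hne
  rcases Nat.lt_or_ge j k with h | h
  · have : 2^(j+1) ≤ 2^k := Nat.pow_le_pow_right (by norm_num) h
    omega
  · have hkj : k < j := by omega
    have : 2^(k+1) ≤ 2^j := Nat.pow_le_pow_right (by norm_num) hkj
    omega

private def Qset (α : ℝ) : Set ℕ := {1} ∪ ⋃ k, (Fk α k : Set ℕ)

private lemma mem_Qset {α : ℝ} {n : ℕ} (h : n ∈ Qset α) :
    n = 1 ∨ n.Prime := by
  rcases h with h | h
  · exact Or.inl h
  · obtain ⟨k, hk⟩ := Set.mem_iUnion.mp h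
    exact Or.inr (mem_Pk ((Fk_spec α k).1 hk)).1

private lemma sum_indicator_le {s t : Finset ℕ} {Q : Set ℕ} (f : ℕ → ℝ)
    (hf : ∀ n, 0 ≤ f n) (hsub : ∀ n ∈ s, n ∈ Q → n ∈ t) :
    ∑ n ∈ s, Q.indicator f n ≤ ∑ n ∈ t, f n := by
  classical
  calc ∑ n ∈ s, Q.indicator f n = ∑ n ∈ s.filter (· ∈ Q), f n := by
        rw [Finset.sum_filter]
        exact Finset.sum_congr rfl fun n _ => by
          by_cases h : n ∈ Q <;> simp [Set.indicator_apply, h]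
    _ ≤ ∑ n ∈ t, f n := Finset.sum_le_sum_of_subset_of_nonneg
        (fun n hn => by
          simp only [Finset.mem_filter] at hn; exact hsub n hn.1 hn.2)
        (fun n _ _ => hf n)

private lemma rpow_nat_mul (a : ℝ) (k : ℕ) : ((2:ℝ)^a)^k = (2:ℝ)^(a*k) := by
  rw [← Real.rpow_natCast ((2:ℝ)^a) k, ← Real.rpow_mul (by norm_num)]

private lemma two_pow_cast (k : ℕ) : ((2^k : ℕ) : ℝ) = (2:ℝ)^(k:ℝ) := by
  push_cast
  rw [Real.rpow_natCast]

private lemma good_infinite {α : ℝ} (hα1 : α < 1) :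
    {k | Nk α k ≤ (Pk k).card}.Infinite := by
  by_contra h
  rw [Set.not_infinite] at h
  obtain ⟨K, hK⟩ := h.bddAbove
  apply not_summable_one_div_on_primes
  set r := (2:ℝ)^(α-1) with hr
  have hr0 : 0 < r := Real.rpow_pos_of_pos two_pos _
  have hr1 : r < 1 := Real.rpow_lt_one_of_one_lt_of_neg one_lt_two (by linarith)
  refine summable_of_block_bound _ (fun n => Set.indicator_nonneg (fun p _ => by positivity) n)
    (fun k => if k ≤ K then 1 else r^k) ?_ ((K:ℝ) + 1 + (1-r)⁻¹) ?_
  · intro k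
    have hb : ∑ n ∈ Finset.Ioc (2^k) (2^(k+1)), Set.indicator {p | Nat.Prime p}
        (fun n : ℕ => (1:ℝ)/n) n ≤ ((Pk k).card : ℝ) * ((2^k : ℕ) : ℝ)⁻¹ := by
      refine le_trans (sum_indicator_le (t := Pk k) _ (fun n => by positivity) ?_) ?_
      · intro n hn hp
        simp only [Pk, Finset.mem_filter]
        exact ⟨hn, hp⟩
      · have := Finset.sum_le_card_nsmul (Pk k) (fun n : ℕ => (1:ℝ)/n) (((2^k : ℕ) : ℝ))⁻¹
          (fun n hn => by
            obtain ⟨-, h1, -⟩ := mem_Pk hn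
            simp only [one_div]
            exact inv_anti₀ (by positivity) (by exact_mod_cast h1.le))
        simpa [nsmul_eq_mul] using this
    by_cases hk : k ≤ K
    · simp only [hk, if_true]
      refine hb.trans ?_
      have hcard : ((Pk k).card : ℝ) ≤ ((2^k : ℕ) : ℝ) := by
        have : (Pk k).card ≤ 2^k := by
          have h1 : (Pk k).card ≤ (Finset.Ioc (2^k) (2^(k+1))).card :=
            Finset.card_filter_le _ _
          rwa [Nat.card_Ioc, show 2^(k+1) - 2^k = 2^k by ring_nf; omega] at h1
        exact_mod_cast this
      calc ((Pk k).card : ℝ) * ((2^k : ℕ) : ℝ)⁻¹ ≤ ((2^k : ℕ):ℝ) * ((2^k : ℕ) : ℝ)⁻¹ := by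
            apply mul_le_mul_of_nonneg_right hcard (by positivity)
        _ = 1 := mul_inv_cancel₀ (by positivity)
    · simp only [hk, if_false]
      refine hb.trans ?_
      have hbad : ((Pk k).card : ℝ) < (2:ℝ)^(α*k) := by
        have h1 : (Pk k).card < Nk α k := by
          by_contra hcon
          exact hk (hK (Set.mem_setOf.mpr (not_lt.mp hcon)))
        have h2 : ((Pk k).card : ℝ) + 1 ≤ (Nk α k : ℝ) := by exact_mod_cast h1
        have h3 : (Nk α k : ℝ) < (2:ℝ)^(α*k) + 1 := Nat.ceil_lt_add_one (by positivity)
        linarith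
      have : ((Pk k).card : ℝ) * ((2^k : ℕ) : ℝ)⁻¹ ≤ (2:ℝ)^(α*k) * ((2:ℝ)^(k:ℝ))⁻¹ := by
        rw [two_pow_cast]
        apply mul_le_mul_of_nonneg_right hbad.le (by positivity)
      refine this.trans (le_of_eq ?_)
      rw [← Real.rpow_neg (by norm_num), ← Real.rpow_add (by norm_num), rpow_nat_mul]
      ring_nf
  · intro m
    have hsplit : ∀ k, (if k ≤ K then (1:ℝ) else r^k) ≤
        (if k ≤ K then (1:ℝ) else 0) + r^k := by
      intro k
      by_cases hk : k ≤ K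
      · simp only [hk, if_true]
        nlinarith [pow_nonneg hr0.le k]
      · simp [hk]
    calc ∑ k ∈ Finset.range m, (if k ≤ K then (1:ℝ) else r^k)
        ≤ ∑ k ∈ Finset.range m, ((if k ≤ K then (1:ℝ) else 0) + r^k) :=
          Finset.sum_le_sum (fun k _ => hsplit k)
      _ = ∑ k ∈ Finset.range m, (if k ≤ K then (1:ℝ) else 0)
            + ∑ k ∈ Finset.range m, r^k := Finset.sum_add_distrib
      _ ≤ ((K:ℝ) + 1) + (1-r)⁻¹ := by
          apply add_le_add ?_ (geom_partial_le hr0.le hr1 m)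
          classical
          rw [Finset.sum_ite, Finset.sum_const, Finset.sum_const_zero, add_zero,
            nsmul_eq_mul, mul_one]
          have hsub : (Finset.range m).filter (fun k => k ≤ K) ⊆ Finset.range (K+1) := by
            intro i hi
            simp only [Finset.mem_filter, Finset.mem_range] at hi ⊢
            omega
          have := Finset.card_le_card hsub
          rw [Finset.card_range] at this
          exact_mod_cast this
      _ = (K:ℝ) + 1 + (1-r)⁻¹ := by ring

private lemma rpow_neg_anti {x y : ℝ} (hx : 0 < x) (hxy : x ≤ y) {ν : ℝ} (hν : 0 ≤ ν) :
    y ^ (-ν) ≤ x ^ (-ν) := by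
  rw [Real.rpow_neg hx.le, Real.rpow_neg (hx.trans_le hxy).le]
  exact inv_anti₀ (Real.rpow_pos_of_pos hx ν) (Real.rpow_le_rpow hx.le hxy hν)

private lemma mem_Fk_of_block {α : ℝ} {n k : ℕ}
    (hn : n ∈ Finset.Ioc (2^k) (2^(k+1))) (hQ : n ∈ Qset α) : n ∈ Fk α k := by
  rw [Finset.mem_Ioc] at hn
  have hn1 : n ≠ 1 := by
    have := Nat.one_le_two_pow (n := k)
    omega
  rcases hQ with h | h
  · exact absurd h hn1
  · obtain ⟨j, hj⟩ := Set.mem_iUnion.mp h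
    have hj' := mem_Pk ((Fk_spec α j).1 hj)
    rwa [block_unique ⟨hj'.2.1, hj'.2.2⟩ hn] at hj

private lemma Qset_summable {α ν : ℝ} (hα0 : 0 < α) (hν : α < ν) :
    Summable ((Qset α).indicator (fun n : ℕ => (n:ℝ) ^ (-ν))) := by
  have hν0 : 0 < ν := hα0.trans hν
  set r1 := (2:ℝ)^(α-ν) with hr1def
  set r2 := (2:ℝ)^(-ν) with hr2def
  have h10 : 0 < r1 := Real.rpow_pos_of_pos two_pos _
  have h20 : 0 < r2 := Real.rpow_pos_of_pos two_pos _
  have h11 : r1 < 1 := Real.rpow_lt_one_of_one_lt_of_neg one_lt_two (by linarith)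
  have h21 : r2 < 1 := Real.rpow_lt_one_of_one_lt_of_neg one_lt_two (by linarith)
  have hfnn : ∀ n : ℕ, 0 ≤ (n:ℝ) ^ (-ν) := fun n => Real.rpow_nonneg (Nat.cast_nonneg n) _
  refine summable_of_block_bound _ (fun n => Set.indicator_nonneg (fun p _ => hfnn p) n)
    (fun k => r1^k + r2^k) ?_ ((1-r1)⁻¹ + (1-r2)⁻¹) ?_
  · intro k
    have hstep1 : ∑ n ∈ Finset.Ioc (2^k) (2^(k+1)),
        (Qset α).indicator (fun n : ℕ => (n:ℝ) ^ (-ν)) n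
        ≤ ((Fk α k).card : ℝ) * ((2^k : ℕ) : ℝ) ^ (-ν) := by
      refine le_trans (sum_indicator_le (t := Fk α k) _ hfnn
        (fun n hn hQ => mem_Fk_of_block hn hQ)) ?_
      have := Finset.sum_le_card_nsmul (Fk α k) (fun n : ℕ => (n:ℝ)^(-ν))
        (((2^k : ℕ) : ℝ)^(-ν)) (fun n hn => by
          have h1 := mem_Pk ((Fk_spec α k).1 hn)
          exact rpow_neg_anti (by positivity) (by exact_mod_cast h1.2.1.le) hν0.le)
      simpa [nsmul_eq_mul] using this
    refine hstep1.trans ?_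
    have hcard : ((Fk α k).card : ℝ) ≤ (2:ℝ)^(α*k) + 1 := by
      have h1 : (Fk α k).card ≤ Nk α k := (Fk_spec α k).2 ▸ min_le_left _ _
      have h2 : (Nk α k : ℝ) < (2:ℝ)^(α*k) + 1 := Nat.ceil_lt_add_one (by positivity)
      have h3 : ((Fk α k).card : ℝ) ≤ (Nk α k : ℝ) := by exact_mod_cast h1
      linarith
    have hpow : ((2^k : ℕ) : ℝ) ^ (-ν) = (2:ℝ)^((-ν)*(k:ℝ)) := by
      rw [two_pow_cast, ← Real.rpow_mul (by norm_num : (0:ℝ) ≤ 2), mul_comm]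
    calc ((Fk α k).card : ℝ) * ((2^k : ℕ) : ℝ) ^ (-ν)
        ≤ ((2:ℝ)^(α*k) + 1) * ((2^k : ℕ) : ℝ) ^ (-ν) := by
          apply mul_le_mul_of_nonneg_right hcard (by positivity)
      _ = r1^k + r2^k := by
          rw [hpow, hr1def, hr2def, rpow_nat_mul, rpow_nat_mul, add_mul, one_mul,
            ← Real.rpow_add (by norm_num)]
          ring_nf
  · intro m
    rw [Finset.sum_add_distrib]
    exact add_le_add (geom_partial_le h10.le h11 m) (geom_partial_le h20.le h21 m)

private lemma Qset_not_summable {α ν : ℝ} (hν0 : 0 < ν) (hνα : ν < α) (hα1 : α < 1) :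
    ¬ Summable ((Qset α).indicator (fun n : ℕ => (n:ℝ) ^ (-ν))) := by
  intro h
  set f := fun n : ℕ => (n:ℝ)^(-ν) with hfdef
  have hfnn : ∀ n : ℕ, 0 ≤ f n := fun n => Real.rpow_nonneg (Nat.cast_nonneg n) _
  have hindnn : ∀ n : ℕ, 0 ≤ (Qset α).indicator f n :=
    fun n => Set.indicator_nonneg (fun p _ => hfnn p) n
  set T := ∑' n, (Qset α).indicator f n with hTdef
  set R := (2:ℝ)^(α-ν) with hRdef
  have hR1 : 1 < R := Real.one_lt_rpow one_lt_two (by linarith)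
  -- for every good k, 2^(-ν) * R^k ≤ T
  have key : ∀ k, Nk α k ≤ (Pk k).card → (2:ℝ)^(-ν) * R^k ≤ T := by
    intro k hk
    have hcard : (Fk α k).card = Nk α k := by
      rw [(Fk_spec α k).2, min_eq_left hk]
    have hlow : ∀ n ∈ Fk α k, ((2^(k+1) : ℕ) : ℝ)^(-ν) ≤ f n := by
      intro n hn
      have h1 := mem_Pk ((Fk_spec α k).1 hn)
      have hn0 : 0 < n := h1.1.pos
      exact rpow_neg_anti (by exact_mod_cast hn0) (by exact_mod_cast h1.2.2) hν0.le
    have h2 : ((Fk α k).card : ℝ) * ((2^(k+1) : ℕ) : ℝ)^(-ν) ≤ ∑ n ∈ Fk α k, f n := by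
      have := Finset.card_nsmul_le_sum (Fk α k) f (((2^(k+1) : ℕ) : ℝ)^(-ν)) hlow
      simpa [nsmul_eq_mul] using this
    have h3 : ∑ n ∈ Fk α k, f n ≤ T := by
      have heq : ∑ n ∈ Fk α k, f n = ∑ n ∈ Fk α k, (Qset α).indicator f n := by
        refine Finset.sum_congr rfl (fun n hn => ?_)
        exact (Set.indicator_of_mem (show n ∈ Qset α from Or.inr
          (Set.mem_iUnion.mpr ⟨k, Finset.mem_coe.mpr hn⟩)) f).symm
      rw [heq]
      exact h.sum_le_tsum _ (fun n _ => hindnn n)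
    have h4 : (2:ℝ)^(α*k) ≤ ((Fk α k).card : ℝ) := by
      rw [hcard]
      exact_mod_cast Nat.le_ceil _
    have h5 : ((2^(k+1) : ℕ) : ℝ)^(-ν) = (2:ℝ)^((-ν)*((k:ℝ)+1)) := by
      rw [two_pow_cast, ← Real.rpow_mul (by norm_num : (0:ℝ) ≤ 2), mul_comm]
      push_cast
      ring_nf
    have h6 : (2:ℝ)^(-ν) * R^k = (2:ℝ)^(α*k) * ((2^(k+1) : ℕ) : ℝ)^(-ν) := by
      rw [h5, hRdef, rpow_nat_mul, ← Real.rpow_add (by norm_num), ← Real.rpow_add (by norm_num)]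
      ring_nf
    calc (2:ℝ)^(-ν) * R^k = (2:ℝ)^(α*k) * ((2^(k+1) : ℕ) : ℝ)^(-ν) := h6
      _ ≤ ((Fk α k).card : ℝ) * ((2^(k+1) : ℕ) : ℝ)^(-ν) := by
          apply mul_le_mul_of_nonneg_right h4 (by positivity)
      _ ≤ ∑ n ∈ Fk α k, f n := h2
      _ ≤ T := h3
  -- get a contradiction
  obtain ⟨K, hK⟩ := Filter.eventually_atTop.mp
    ((tendsto_pow_atTop_atTop_of_one_lt hR1).eventually_ge_atTop ((T+1) * (2:ℝ)^ν))
  obtain ⟨k, hk, hKk⟩ := (good_infinite hα1).exists_gt K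
  have h7 := key k hk
  have h8 : (T+1) * (2:ℝ)^ν ≤ R^k := hK k hKk.le
  have h9 : (0:ℝ) < (2:ℝ)^(-ν) := Real.rpow_pos_of_pos two_pos _
  have h10 : (2:ℝ)^(-ν) * (2:ℝ)^ν = 1 := by
    rw [← Real.rpow_add (by norm_num)]
    simp
  have h11 : (2:ℝ)^(-ν) * ((T+1) * (2:ℝ)^ν) = T+1 := by
    rw [show (2:ℝ)^(-ν) * ((T+1) * (2:ℝ)^ν) = ((2:ℝ)^(-ν) * (2:ℝ)^ν) * (T+1) by ring, h10,
      one_mul]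
  linarith [mul_le_mul_of_nonneg_left h8 h9.le]

private lemma sInf_exponent {α : ℝ} (h0 : 0 < α) {P : ℝ → Prop}
    (hsum : ∀ ν, α < ν → P ν) (hdiv : ∀ ν, 0 < ν → P ν → α ≤ ν) :
    sInf {ν : ℝ | 0 < ν ∧ P ν} = α := by
  apply le_antisymm
  · calc sInf {ν : ℝ | 0 < ν ∧ P ν} ≤ sInf (Set.Ioi α) :=
          csInf_le_csInf ⟨0, fun ν hν => hν.1.le⟩ Set.nonempty_Ioi
            (fun ν hν => ⟨h0.trans hν, hsum ν hν⟩)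
      _ = α := csInf_Ioi
  · exact le_csInf ⟨α+1, by constructor <;> [linarith; exact hsum _ (by linarith)]⟩
      (fun ν hν => hdiv ν hν.1 hν.2)

theorem exists_free_set_with_exponent (α : ℝ) (hα : α ∈ Set.Ioc (0 : ℝ) 1) :
    ∃ Q : Set ℕ, (∀ q ∈ Q, 0 < q) ∧
      (∀ q : ℕ, 0 < q → (q ∈ Q ↔ ∀ v : ℕ, 0 < v → v ∉ Q → ¬ v ∣ q)) ∧
      sInf {ν : ℝ | 0 < ν ∧ Summable (fun q : Q => ((q : ℕ) : ℝ) ^ (-ν))} = α := by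
  obtain ⟨hα0, hα1⟩ := hα
  rcases eq_or_lt_of_le hα1 with heq | hlt
  · -- case α = 1 : take Q = {1} ∪ primes
    subst heq
    refine ⟨{1} ∪ {p | p.Prime}, ?_, ?_, ?_⟩
    · rintro q (hq | hq)
      · simp only [Set.mem_singleton_iff] at hq; omega
      · exact hq.pos
    · intro q hq
      constructor
      · rintro hqQ v hv hvQ hdvd
        apply hvQ
        rcases hqQ with h | h
        · simp only [Set.mem_singleton_iff] at h
          subst h
          left
          exact Nat.eq_one_of_dvd_one hdvd
        · rcases (Nat.Prime.eq_one_or_self_of_dvd h v hdvd) with rfl | rfl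
          · exact Or.inl rfl
          · exact Or.inr h
      · intro hcond
        by_contra hqQ
        exact hcond q hq hqQ dvd_rfl
    · apply sInf_exponent hα0
      · intro ν hν
        rw [show (fun q : ({1} ∪ {p | p.Prime} : Set ℕ) => ((q : ℕ) : ℝ) ^ (-ν)) =
          (fun n : ℕ => (n:ℝ) ^ (-ν)) ∘ (Subtype.val) from rfl, summable_subtype_iff_indicator]
        apply Summable.of_nonneg_of_le
          (fun n => Set.indicator_nonneg (fun p _ => Real.rpow_nonneg (Nat.cast_nonneg p) _) n)
          (fun n => Set.indicator_le_self' (fun n _ => Real.rpow_nonneg (Nat.cast_nonneg n) _) n)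
        exact Real.summable_nat_rpow.mpr (by linarith)
      · intro ν hν0 hsum
        by_contra hcon
        push_neg at hcon
        rw [show (fun q : ({1} ∪ {p | p.Prime} : Set ℕ) => ((q : ℕ) : ℝ) ^ (-ν)) =
          (fun n : ℕ => (n:ℝ) ^ (-ν)) ∘ (Subtype.val) from rfl,
          summable_subtype_iff_indicator] at hsum
        apply not_summable_one_div_on_primes
        apply Summable.of_nonneg_of_le
          (fun n => Set.indicator_nonneg (fun p _ => by positivity) n) ?_ hsum
        intro n
        by_cases hp : n ∈ {p | Nat.Prime p}
        · rw [Set.indicator_of_mem hp, Set.indicator_of_mem (Set.mem_union_right _ hp)]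
          have h2 : (2:ℝ) ≤ (n:ℝ) := by exact_mod_cast hp.two_le
          rw [one_div, show ((n:ℝ))⁻¹ = (n:ℝ)^(-(1:ℝ)) by rw [Real.rpow_neg_one]]
          exact Real.rpow_le_rpow_of_exponent_le (by linarith) (by linarith)
        · rw [Set.indicator_of_notMem hp]
          exact Set.indicator_nonneg (fun p _ => Real.rpow_nonneg (Nat.cast_nonneg p) _) n
  · -- case α < 1
    refine ⟨Qset α, ?_, ?_, ?_⟩
    · intro q hq
      rcases mem_Qset hq with rfl | hp
      · omega
      · exact hp.pos
    · intro q hq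
      constructor
      · rintro hqQ v hv hvQ hdvd
        apply hvQ
        rcases mem_Qset hqQ with rfl | hp
        · have : v = 1 := Nat.eq_one_of_dvd_one hdvd  -- check name
          subst this
          exact Or.inl rfl
        · rcases (Nat.Prime.eq_one_or_self_of_dvd hp v hdvd) with rfl | rfl
          · exact Or.inl rfl
          · exact hqQ
      · intro hcond
        by_contra hqQ
        exact hcond q hq hqQ dvd_rfl
    · apply sInf_exponent hα0
      · intro ν hν
        rw [show (fun q : (Qset α) => ((q : ℕ) : ℝ) ^ (-ν)) =
          (fun n : ℕ => (n:ℝ) ^ (-ν)) ∘ (Subtype.val) from rfl, summable_subtype_iff_indicator]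
        exact Qset_summable hα0 hν
      · intro ν hν0 hsum
        by_contra hcon
        push_neg at hcon
        rw [show (fun q : (Qset α) => ((q : ℕ) : ℝ) ^ (-ν)) =
          (fun n : ℕ => (n:ℝ) ^ (-ν)) ∘ (Subtype.val) from rfl,
          summable_subtype_iff_indicator] at hsum
        exact Qset_not_summable hν0 hcon hlt hsum
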